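/- Let n ≥ 1, let K be an n×n real matrix, and let μ : {0,1}^n → ℝ be any function. Then the following are equivalent: (i) for every subset S ⊆ {1,…,n}, the sum of μ(x) over all x ∈ {0,1}^n with x_i = 1 for all i ∈ S equals det(K_S^S), the principal minor of K on rows and columns indexed by S; (ii) for every x ∈ {0,1}^n, μ(x) = (−1)^{n−|x|} · det(K − X), where X is the diagonal matrix with diagonal entries 1−x_1, …, 1−x_n and |x| = x_1 + ⋯ + x_n. -/

import Mathlib

open Matrix BigOperators Finset

variable {n : ℕ} (K : Matrix (Fin n) (Fin n) ℝ)

noncomputable def pm (S : Finset (Fin n)) : ℝ :=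
  (K.submatrix (fun i : S => (i : Fin n)) (fun i : S => (i : Fin n))).det

lemma det_piecewise_single (T : Finset (Fin n)) :
    Matrix.det (Matrix.of (T.piecewise (fun i => Pi.single i (1:ℝ)) (fun i => K i))) = pm K Tᶜ := by
  classical
  set M : Matrix (Fin n) (Fin n) ℝ := Matrix.of (T.piecewise (fun i => Pi.single i (1:ℝ)) (fun i => K i))
  set e : {i : Fin n // i ∉ T} ⊕ {i : Fin n // ¬ i ∉ T} ≃ Fin n := Equiv.sumCompl (fun i => i ∉ T) with he
  have hmem : ∀ a : {i : Fin n // ¬ i ∉ T}, (a : Fin n) ∈ T := fun a => not_not.mp a.2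
  have hM : M.submatrix e e =
      fromBlocks (K.submatrix (fun a : {i : Fin n // i ∉ T} => (a : Fin n)) (fun a : {i : Fin n // i ∉ T} => (a : Fin n)))
        (K.submatrix (fun a : {i : Fin n // i ∉ T} => (a : Fin n)) (fun b : {i : Fin n // ¬ i ∉ T} => (b : Fin n)))
        0 1 := by
    ext a b
    cases a with
    | inl a =>
      cases b with
      | inl b =>
        simp [M, he, Matrix.submatrix, Finset.piecewise_eq_of_notMem _ _ _ a.2, fromBlocks]
      | inr b =>
        simp [M, he, Matrix.submatrix, Finset.piecewise_eq_of_notMem _ _ _ a.2, fromBlocks]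
    | inr a =>
      cases b with
      | inl b =>
        have hne : (b : Fin n) ≠ (a : Fin n) := fun h => b.2 (h ▸ hmem a)
        simp [M, he, Matrix.submatrix, Finset.piecewise_eq_of_mem _ _ _ (hmem a), Pi.single_apply,
          hne, fromBlocks]
      | inr b =>
        by_cases hab : a = b
        · subst hab
          simp [M, he, Matrix.submatrix, Finset.piecewise_eq_of_mem _ _ _ (hmem a), Pi.single_apply,
            Matrix.one_apply, fromBlocks]
        · have hne : (b : Fin n) ≠ (a : Fin n) := fun h => hab (Subtype.ext h.symm)
          simp [M, he, Matrix.submatrix, Finset.piecewise_eq_of_mem _ _ _ (hmem a), Pi.single_apply,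
            Matrix.one_apply, hne, hab, fromBlocks]
  have h1 : M.det = (K.submatrix (fun a : {i : Fin n // i ∉ T} => (a : Fin n)) (fun a : {i : Fin n // i ∉ T} => (a : Fin n))).det := by
    rw [← Matrix.det_submatrix_equiv_self e M, hM, Matrix.det_fromBlocks_zero₂₁]
    simp
  rw [h1]
  unfold pm
  set g : {i : Fin n // i ∉ T} ≃ {i : Fin n // i ∈ Tᶜ} :=
    Equiv.subtypeEquivRight (fun i => (Finset.mem_compl).symm) with hg
  rw [← Matrix.det_submatrix_equiv_self g, Matrix.submatrix_submatrix]
  rfl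

lemma det_sub_diagonal (c : Fin n → ℝ) :
    (K - Matrix.diagonal c).det = ∑ T : Finset (Fin n), (∏ i ∈ T, (-(c i))) * pm K Tᶜ := by
  classical
  set E : Fin n → (Fin n → ℝ) := fun i => Pi.single i (1:ℝ) with hE
  have key : ∀ T : Finset (Fin n),
      Matrix.det (Matrix.of (T.piecewise (fun i => (-(Matrix.diagonal c)) i) (fun i => K i)))
        = (∏ i ∈ T, (-(c i))) * pm K Tᶜ := by
    intro T
    have hpw : T.piecewise (fun i => (-(Matrix.diagonal c)) i) (fun i => K i)
        = T.piecewise (fun i => (-(c i)) • (T.piecewise E (fun i => K i)) i)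
            (T.piecewise E (fun i => K i)) := by
      ext i j
      by_cases hi : i ∈ T
      · rw [Finset.piecewise_eq_of_mem _ _ _ hi, Finset.piecewise_eq_of_mem _ _ _ hi]
        rw [Finset.piecewise_eq_of_mem _ _ _ hi]
        simp only [Pi.neg_apply, Matrix.diagonal_apply, Pi.smul_apply, smul_eq_mul, hE,
          Pi.single_apply]
        by_cases hij : i = j
        · subst hij; simp
        · simp [hij, Ne.symm hij]
      · rw [Finset.piecewise_eq_of_notMem _ _ _ hi, Finset.piecewise_eq_of_notMem _ _ _ hi,
          Finset.piecewise_eq_of_notMem _ _ _ hi]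
    have h2 := (Matrix.detRowAlternating (n := Fin n) (R := ℝ)).toMultilinearMap.map_piecewise_smul
      (fun i => -(c i)) (T.piecewise E (fun i => K i)) T
    calc Matrix.det (Matrix.of (T.piecewise (fun i => (-(Matrix.diagonal c)) i) (fun i => K i)))
        = Matrix.detRowAlternating
            (T.piecewise (fun i => (-(c i)) • (T.piecewise E (fun i => K i)) i)
              (T.piecewise E (fun i => K i))) := by rw [show Matrix.det (Matrix.of (T.piecewise (fun i => (-(Matrix.diagonal c)) i) (fun i => K i))) = Matrix.detRowAlternating (T.piecewise (fun i => (-(Matrix.diagonal c)) i) (fun i => K i)) from rfl, hpw]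
      _ = (∏ i ∈ T, (-(c i))) • Matrix.detRowAlternating (T.piecewise E (fun i => K i)) := h2
      _ = (∏ i ∈ T, (-(c i))) * pm K Tᶜ := by
            rw [smul_eq_mul]
            congr 1
            exact det_piecewise_single K T
  have hsplit : K - Matrix.diagonal c
      = Matrix.of ((fun i => (-(Matrix.diagonal c)) i) + (fun i => K i)) := by
    ext i j
    simp only [Matrix.sub_apply, Matrix.of_apply, Pi.add_apply, Matrix.neg_apply]
    ring
  rw [hsplit]
  have h3 := (Matrix.detRowAlternating (n := Fin n) (R := ℝ)).toMultilinearMap.map_add_univ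
    (fun i => (-(Matrix.diagonal c)) i) (fun i => K i)
  calc Matrix.det (Matrix.of ((fun i => (-(Matrix.diagonal c)) i) + (fun i => K i)))
      = Matrix.detRowAlternating ((fun i => (-(Matrix.diagonal c)) i) + (fun i => K i)) := rfl
    _ = ∑ T : Finset (Fin n),
          Matrix.detRowAlternating (T.piecewise (fun i => (-(Matrix.diagonal c)) i) (fun i => K i)) := h3
    _ = ∑ T : Finset (Fin n), (∏ i ∈ T, (-(c i))) * pm K Tᶜ := by
          exact Finset.sum_congr rfl fun T _ => key T

lemma neg_one_pow_sub {a b : ℕ} (h : b ≤ a) : ((-1:ℝ))^(a-b) = (-1)^a * (-1)^b := by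
  have h1 : ((-1:ℝ))^(a-b) * (-1)^b = (-1)^a := by
    rw [← pow_add, Nat.sub_add_cancel h]
  have h2 : ((-1:ℝ))^b * (-1)^b = 1 := by
    rw [← mul_pow]; norm_num
  calc ((-1:ℝ))^(a-b) = ((-1:ℝ))^(a-b) * (((-1:ℝ))^b * (-1)^b) := by rw [h2, mul_one]
    _ = (((-1:ℝ))^(a-b) * (-1)^b) * (-1)^b := by ring
    _ = (-1)^a * (-1)^b := by rw [h1]

lemma real_powerset_sum {α : Type*} [DecidableEq α] (x : Finset α) :
    (∑ m ∈ x.powerset, (-1 : ℝ) ^ m.card) = if x = ∅ then 1 else 0 := by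
  have h := Finset.sum_powerset_neg_one_pow_card (x := x)
  have := congrArg (fun z : ℤ => (z : ℝ)) h
  push_cast at this
  simpa using this

lemma alt_sum {n : ℕ} (S V : Finset (Fin n)) :
    ∑ U ∈ Finset.univ.filter (fun U => S ⊆ U ∧ U ⊆ V), ((-1:ℝ))^U.card
      = (-1)^S.card * (if S = V then 1 else 0) := by
  classical
  by_cases hSV : S ⊆ V
  · rw [show (Finset.univ.filter (fun U => S ⊆ U ∧ U ⊆ V))
        = (V \ S).powerset.image (fun W => S ∪ W) from ?_]
    · rw [Finset.sum_image ?inj]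
      case inj =>
        intro W1 h1 W2 h2 hEq
        rw [Finset.mem_coe, Finset.mem_powerset] at h1 h2
        have d1 : Disjoint S W1 := Finset.disjoint_of_subset_right h1 Finset.sdiff_disjoint.symm
        have d2 : Disjoint S W2 := Finset.disjoint_of_subset_right h2 Finset.sdiff_disjoint.symm
        calc W1 = (S ∪ W1) \ S := by rw [Finset.union_sdiff_cancel_left d1]
          _ = (S ∪ W2) \ S := by rw [show S ∪ W1 = S ∪ W2 from hEq]
          _ = W2 := by rw [Finset.union_sdiff_cancel_left d2]
      have : ∀ W ∈ (V \ S).powerset, ((-1:ℝ))^(S ∪ W).card = (-1)^S.card * (-1)^W.card := by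
        intro W hW
        rw [Finset.mem_powerset] at hW
        have d : Disjoint S W := Finset.disjoint_of_subset_right hW Finset.sdiff_disjoint.symm
        rw [Finset.card_union_of_disjoint d, pow_add]
      rw [Finset.sum_congr rfl this, ← Finset.mul_sum, real_powerset_sum]
      congr 1
      have : V \ S = ∅ ↔ S = V := by
        rw [Finset.sdiff_eq_empty_iff_subset]
        exact ⟨fun h => Finset.Subset.antisymm hSV h, fun h => h ▸ le_refl _⟩
      simp [this]
    · ext U
      simp only [Finset.mem_filter, Finset.mem_univ, true_and, Finset.mem_image,
        Finset.mem_powerset]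
      constructor
      · rintro ⟨h1, h2⟩
        exact ⟨U \ S, Finset.sdiff_subset_sdiff h2 (le_refl _), by
          rw [Finset.union_sdiff_of_subset h1]⟩
      · rintro ⟨W, hW, rfl⟩
        exact ⟨Finset.subset_union_left, Finset.union_subset hSV
          (hW.trans Finset.sdiff_subset)⟩
  · have hne : S ≠ V := fun h => hSV (h ▸ le_refl _)
    rw [Finset.filter_false_of_mem, Finset.sum_empty, if_neg hne, mul_zero]
    rintro U _ ⟨h1, h2⟩
    exact hSV (h1.trans h2)

lemma inv_sum {n : ℕ} (g : Finset (Fin n) → ℝ) (S : Finset (Fin n)) :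
    ∑ U ∈ Finset.univ.filter (fun U => S ⊆ U),
      ∑ V ∈ Finset.univ.filter (fun V => U ⊆ V), ((-1:ℝ))^U.card * (-1)^V.card * g V
      = g S := by
  classical
  have step1 : ∑ U ∈ Finset.univ.filter (fun U => S ⊆ U),
      ∑ V ∈ Finset.univ.filter (fun V => U ⊆ V), ((-1:ℝ))^U.card * (-1)^V.card * g V
      = ∑ U ∈ (Finset.univ : Finset (Finset (Fin n))),
          ∑ V ∈ (Finset.univ : Finset (Finset (Fin n))),
            if S ⊆ U ∧ U ⊆ V then ((-1:ℝ))^U.card * (-1)^V.card * g V else 0 := by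
    rw [Finset.sum_filter]
    apply Finset.sum_congr rfl
    intro U _
    by_cases hU : S ⊆ U
    · rw [if_pos hU, Finset.sum_filter]
      apply Finset.sum_congr rfl
      intro V _
      by_cases hV : U ⊆ V <;> simp [hU, hV]
    · rw [if_neg hU]
      symm
      apply Finset.sum_eq_zero
      intro V _
      simp [hU]
  rw [step1, Finset.sum_comm]
  have step2 : ∀ V : Finset (Fin n),
      (∑ U ∈ (Finset.univ : Finset (Finset (Fin n))),
        if S ⊆ U ∧ U ⊆ V then ((-1:ℝ))^U.card * (-1)^V.card * g V else 0)
      = (if S = V then 1 else 0) * g V := by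
    intro V
    rw [← Finset.sum_filter]
    have : ∑ U ∈ Finset.univ.filter (fun U => S ⊆ U ∧ U ⊆ V),
        ((-1:ℝ))^U.card * (-1)^V.card * g V
        = (∑ U ∈ Finset.univ.filter (fun U => S ⊆ U ∧ U ⊆ V), ((-1:ℝ))^U.card)
            * ((-1)^V.card * g V) := by
      rw [Finset.sum_mul]
      apply Finset.sum_congr rfl
      intro U _
      ring
    rw [this, alt_sum]
    by_cases h : S = V
    · subst h
      simp only [if_true, mul_one, one_mul]
      rw [← mul_assoc, ← mul_pow]
      norm_num
    · simp [h]
  rw [Finset.sum_congr rfl (fun V _ => step2 V)]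
  simp only [ite_mul, one_mul, zero_mul]
  rw [Finset.sum_ite_eq]
  simp

lemma lemR (x : Fin n → Bool) :
    ((-1:ℝ)) ^ (n - (Finset.univ.filter (fun i => x i = true)).card)
      * (K - Matrix.diagonal (fun i => if x i then (0 : ℝ) else 1)).det
    = ∑ V ∈ Finset.univ.filter (fun V => (Finset.univ.filter (fun i => x i = true)) ⊆ V),
        ((-1:ℝ))^(Finset.univ.filter (fun i => x i = true)).card * (-1)^V.card * pm K V := by
  classical
  set S : Finset (Fin n) := Finset.univ.filter (fun i => x i = true) with hS
  set c : Fin n → ℝ := fun i => if x i then (0:ℝ) else 1 with hc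
  have hcard : ∀ V : Finset (Fin n), V.card ≤ n := fun V => by
    simpa using Finset.card_le_univ V
  have hnn : ((-1:ℝ))^n * (-1)^n = 1 := by rw [← mul_pow]; norm_num
  rw [det_sub_diagonal]
  have stepa : ∑ T : Finset (Fin n), (∏ i ∈ T, (-(c i))) * pm K Tᶜ
      = ∑ T ∈ Finset.univ.filter (fun T => T ⊆ Sᶜ), ((-1:ℝ))^T.card * pm K Tᶜ := by
    rw [Finset.sum_filter]
    apply Finset.sum_congr rfl
    intro T _
    by_cases hT : T ⊆ Sᶜ
    · rw [if_pos hT]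
      congr 1
      have : ∀ i ∈ T, -(c i) = (-1:ℝ) := by
        intro i hi
        have := hT hi
        rw [Finset.mem_compl, hS, Finset.mem_filter] at this
        have hxi : x i = false := by
          cases h : x i
          · rfl
          · exact absurd ⟨Finset.mem_univ i, h⟩ this
        simp [hc, hxi]
      rw [Finset.prod_congr rfl this, Finset.prod_const]
    · rw [if_neg hT]
      obtain ⟨i, hiT, hiS⟩ : ∃ i ∈ T, i ∉ Sᶜ := by
        by_contra h
        push_neg at h
        exact hT h
      have hxi : x i = true := by
        rw [Finset.mem_compl, not_not, hS, Finset.mem_filter] at hiS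
        exact hiS.2
      have : -(c i) = 0 := by simp [hc, hxi]
      rw [Finset.prod_eq_zero hiT this, zero_mul]
  rw [stepa]
  have stepb : ∑ T ∈ Finset.univ.filter (fun T => T ⊆ Sᶜ), ((-1:ℝ))^T.card * pm K Tᶜ
      = ∑ V ∈ Finset.univ.filter (fun V => S ⊆ V), ((-1:ℝ))^(Vᶜ.card) * pm K V := by
    apply Finset.sum_nbij' (fun T => Tᶜ) (fun V => Vᶜ)
    · intro T hT
      rw [Finset.mem_filter] at hT ⊢
      exact ⟨Finset.mem_univ _, Finset.subset_compl_comm.mp hT.2⟩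
    · intro V hV
      rw [Finset.mem_filter] at hV ⊢
      refine ⟨Finset.mem_univ _, ?_⟩
      rw [Finset.subset_compl_comm, compl_compl]
      exact hV.2
    · intro T _; exact compl_compl T
    · intro V _; exact compl_compl V
    · intro T _
      rw [compl_compl]
  rw [stepb, Finset.mul_sum]
  apply Finset.sum_congr rfl
  intro V _
  have h1 : Vᶜ.card = n - V.card := by
    rw [Finset.card_compl]
    simp
  rw [h1, neg_one_pow_sub (hcard V), neg_one_pow_sub (hcard S)]
  calc ((-1:ℝ))^n * (-1)^S.card * ((-1)^n * (-1)^V.card * pm K V)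
      = ((-1:ℝ)^n * (-1)^n) * ((-1)^S.card * (-1)^V.card * pm K V) := by ring
    _ = (-1)^S.card * (-1)^V.card * pm K V := by rw [hnn, one_mul]

lemma split_sup (h : Finset (Fin n) → ℝ) (U : Finset (Fin n)) :
    ∑ V ∈ Finset.univ.filter (fun V => U ⊆ V), h V
      = h U + ∑ V ∈ Finset.univ.filter (fun V => U ⊂ V), h V := by
  classical
  have hins : Finset.univ.filter (fun V => U ⊆ V)
      = insert U (Finset.univ.filter (fun V => U ⊂ V)) := by
    ext V
    simp only [Finset.mem_filter, Finset.mem_univ, true_and, Finset.mem_insert]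
    constructor
    · intro hUV
      rcases eq_or_ne V U with rfl | h'
      · exact Or.inl rfl
      · exact Or.inr (Finset.ssubset_iff_subset_ne.mpr ⟨hUV, Ne.symm h'⟩)
    · rintro (rfl | h')
      · exact Finset.Subset.refl _
      · exact (Finset.ssubset_iff_subset_ne.mp h').1
  rw [hins, Finset.sum_insert (by simp [Finset.ssubset_iff_subset_ne])]

/-- A function `μ` on `{0,1}^n` is a determinantal measure with kernel `K`
(principal minors of `K` give the probabilities of sets of coordinates being 1)
iff each single-point value is given by `(-1)^(n-|x|) det (K - X)`. -/
theorem stmt_0 (n : ℕ) (hn : 1 ≤ n) (K : Matrix (Fin n) (Fin n) ℝ)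
    (μ : (Fin n → Bool) → ℝ) :
    (∀ S : Finset (Fin n),
        ∑ x ∈ Finset.univ.filter (fun x : Fin n → Bool => ∀ i ∈ S, x i = true), μ x
          = (K.submatrix (fun i : S => (i : Fin n)) (fun i : S => (i : Fin n))).det)
    ↔
    (∀ x : Fin n → Bool,
        μ x = (-1 : ℝ) ^ (n - (Finset.univ.filter (fun i => x i = true)).card)
          * (K - Matrix.diagonal (fun i => if x i then (0 : ℝ) else 1)).det) := by
  classical
  set supp : (Fin n → Bool) → Finset (Fin n) :=
    fun x => Finset.univ.filter (fun i => x i = true) with hsupp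
  set χ : Finset (Fin n) → (Fin n → Bool) := fun U i => decide (i ∈ U) with hχ
  have hχsupp : ∀ x, χ (supp x) = x := by
    intro x
    funext i
    simp [hχ, hsupp]
  have hsuppχ : ∀ U, supp (χ U) = U := by
    intro U
    ext i
    simp [hχ, hsupp]
  set ν : Finset (Fin n) → ℝ := fun U => μ (χ U) with hν
  set Mν : Finset (Fin n) → ℝ := fun U =>
    ∑ V ∈ Finset.univ.filter (fun V => U ⊆ V), ((-1:ℝ))^U.card * (-1)^V.card * pm K V with hMν
  have hμν : ∀ x, μ x = ν (supp x) := fun x => (congrArg μ (hχsupp x)).symm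
  have hsum : ∀ S : Finset (Fin n),
      ∑ x ∈ Finset.univ.filter (fun x : Fin n → Bool => ∀ i ∈ S, x i = true), μ x
        = ∑ U ∈ Finset.univ.filter (fun U => S ⊆ U), ν U := by
    intro S
    apply Finset.sum_nbij' supp χ
    · intro x hx
      rw [Finset.mem_filter] at hx ⊢
      refine ⟨Finset.mem_univ _, fun i hi => ?_⟩
      rw [hsupp]
      simp only [Finset.mem_filter, Finset.mem_univ, true_and]
      exact hx.2 i hi
    · intro U hU
      rw [Finset.mem_filter] at hU ⊢
      refine ⟨Finset.mem_univ _, fun i hi => ?_⟩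
      simp [hχ, hU.2 hi]
    · intro x _; exact hχsupp x
    · intro U _; exact hsuppχ U
    · intro x _; exact hμν x
  have keyA : ∀ S : Finset (Fin n),
      ∑ U ∈ Finset.univ.filter (fun U => S ⊆ U), Mν U = pm K S := by
    intro S
    exact inv_sum (pm K) S
  have hR : ∀ x : Fin n → Bool,
      ((-1 : ℝ) ^ (n - (Finset.univ.filter (fun i => x i = true)).card)
          * (K - Matrix.diagonal (fun i => if x i then (0 : ℝ) else 1)).det)
        = Mν (supp x) := fun x => lemR K x
  constructor
  · -- (i) → (ii)
    intro H x
    have H1 : ∀ S, ∑ U ∈ Finset.univ.filter (fun U => S ⊆ U), ν U = pm K S := by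
      intro S
      rw [← hsum S]
      exact H S
    have main : ∀ k : ℕ, ∀ U : Finset (Fin n), (Finset.univ \ U).card = k → ν U = Mν U := by
      intro k
      induction k using Nat.strong_induction_on with
      | _ k ih =>
        intro U hk
        have e1 := H1 U
        have e2 := keyA U
        rw [split_sup] at e1 e2
        have heq : ∑ V ∈ Finset.univ.filter (fun V => U ⊂ V), ν V
            = ∑ V ∈ Finset.univ.filter (fun V => U ⊂ V), Mν V := by
          apply Finset.sum_congr rfl
          intro V hV
          rw [Finset.mem_filter] at hV
          have hlt : (Finset.univ \ V).card < k := by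
            have h1 : (Finset.univ \ V).card = n - V.card := by
              rw [Finset.card_sdiff_of_subset (Finset.subset_univ V)]
              simp
            have h2 : (Finset.univ \ U).card = n - U.card := by
              rw [Finset.card_sdiff_of_subset (Finset.subset_univ U)]
              simp
            have h3 : U.card < V.card := Finset.card_lt_card hV.2
            have h4 : V.card ≤ n := by simpa using Finset.card_le_univ V
            omega
          exact ih _ hlt V rfl
        rw [heq] at e1
        linarith
    rw [hμν x, hR x]
    exact main ((Finset.univ \ supp x).card) (supp x) rfl
  · -- (ii) → (i)
    intro H S
    have H2 : ∀ U, ν U = Mν U := by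
      intro U
      have := H (χ U)
      rw [hR (χ U), hsuppχ U] at this
      exact this
    rw [hsum S]
    have : ∑ U ∈ Finset.univ.filter (fun U => S ⊆ U), ν U
        = ∑ U ∈ Finset.univ.filter (fun U => S ⊆ U), Mν U :=
      Finset.sum_congr rfl (fun U _ => H2 U)
    rw [this, keyA S]
    rfl
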